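/- Let L ⊂ ℝⁿ be an l-dimensional submanifold that is the graph of a C^{k,α} map F : O → ℝ^{n−l} on an open set O ⊂ ℝ^l, with k ≥ 1 and 0 ≤ α ≤ 1. If the second fundamental form of L is of class C^{k−1,α}, then F is of class C^{k+1,α}; i.e., L is a C^{k+1,α} submanifold. -/

import Mathlib

open scoped RealInnerProductSpace

noncomputable section

/-- The ambient Euclidean space `ℝⁿ = ℝˡ × ℝ^{n-l}` (with the ℓ² product inner product). -/
abbrev Amb (l m : ℕ) : Type :=
  WithLp 2 (EuclideanSpace ℝ (Fin l) × EuclideanSpace ℝ (Fin m))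

def toAmb {l m : ℕ} (x : EuclideanSpace ℝ (Fin l)) (y : EuclideanSpace ℝ (Fin m)) :
    Amb l m :=
  (WithLp.equiv 2 (EuclideanSpace ℝ (Fin l) × EuclideanSpace ℝ (Fin m))).symm (x, y)

/-- The tangent space of the graph of `F` at the point `(x, F x)`. -/
def graphTangent {l m : ℕ} (F : EuclideanSpace ℝ (Fin l) → EuclideanSpace ℝ (Fin m))
    (x : EuclideanSpace ℝ (Fin l)) : Submodule ℝ (Amb l m) :=
  LinearMap.range
    ((WithLp.linearEquiv 2 ℝ
        (EuclideanSpace ℝ (Fin l) × EuclideanSpace ℝ (Fin m))).symm.toLinearMap.comp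
      (LinearMap.prod (LinearMap.id) ((fderiv ℝ F x).toLinearMap)))

/-- The second fundamental form of the graph of `F` at `(x, F x)`, evaluated on the
tangent vectors with `ℝˡ`-coordinates `v` and `w`: the orthogonal projection of
`(0, D²F_x(v,w))` onto the normal space of the graph. -/
def secondFF {l m : ℕ} (F : EuclideanSpace ℝ (Fin l) → EuclideanSpace ℝ (Fin m))
    (x v w : EuclideanSpace ℝ (Fin l)) : Amb l m :=
  (Submodule.orthogonalProjectionOnto ((graphTangent F x)ᗮ)
    (toAmb 0 (fderiv ℝ (fderiv ℝ F) x v w)) : Amb l m)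

/-- `f` is of class `C^{k,α}` on `s`: it is `C^k` on `s` and its `k`-th derivative is
locally `α`-Hölder on `s`. -/
def HolderRegOn (k : ℕ) (α : NNReal) {E F : Type*} [NormedAddCommGroup E] [NormedSpace ℝ E]
    [NormedAddCommGroup F] [NormedSpace ℝ F] (f : E → F) (s : Set E) : Prop :=
  ContDiffOn ℝ k f s ∧
    ∀ x ∈ s, ∃ u ∈ nhdsWithin x s, ∃ C : NNReal,
      HolderOnWith C α (iteratedFDerivWithin ℝ k f s) u

/-! ### Auxiliary lemmas about `HolderRegOn` -/

section Helpers

set_option linter.unusedSectionVars false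

open Set

universe u
variable {E F₁ : Type u} [NormedAddCommGroup E] [NormedSpace ℝ E]
  [NormedAddCommGroup F₁] [NormedSpace ℝ F₁]

theorem holderOnWith_iff_dist {C r : NNReal} {f : E → F₁} {s : Set E} :
    HolderOnWith C r f s ↔ ∀ x ∈ s, ∀ y ∈ s, dist (f x) (f y) ≤ C * dist x y ^ (r : ℝ) := by
  unfold HolderOnWith
  refine forall₄_congr fun x hx y hy => ?_
  rw [edist_nndist, edist_nndist, ← ENNReal.coe_rpow_of_nonneg _ r.coe_nonneg,
    ← ENNReal.coe_mul, ENNReal.coe_le_coe, ← NNReal.coe_le_coe]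
  push_cast [NNReal.coe_rpow, coe_nndist]
  rfl

theorem lipschitzOnWith_holder {α : NNReal} (hα : α ≤ 1) {K : NNReal} {f : E → F₁} {u : Set E}
    (hK : LipschitzOnWith K f u) (hu : ∀ x ∈ u, ∀ y ∈ u, dist x y ≤ 1) :
    HolderOnWith K α f u := by
  rw [holderOnWith_iff_dist]
  intro x hx y hy
  have h1 : dist (f x) (f y) ≤ K * dist x y := hK.dist_le_mul x hx y hy
  have h2 : dist x y ≤ dist x y ^ (α : ℝ) := by
    rcases eq_or_lt_of_le (dist_nonneg (x := x) (y := y)) with h | h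
    · rw [← h]; exact Real.rpow_nonneg le_rfl _
    · calc dist x y = dist x y ^ (1 : ℝ) := (Real.rpow_one _).symm
        _ ≤ dist x y ^ (α : ℝ) :=
          Real.rpow_le_rpow_of_exponent_ge h (hu x hx y hy) (by exact_mod_cast hα)
  calc dist (f x) (f y) ≤ K * dist x y := h1
    _ ≤ K * dist x y ^ (α : ℝ) := by gcongr

theorem holder_aux {O : Set E} (hO : IsOpen O) {n : ℕ} {f : E → F₁}
    (hf : ContDiffOn ℝ (n + 1) f O) {α : NNReal} (hα : α ≤ 1) {x : E} (hx : x ∈ O) :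
    ∃ u ∈ nhdsWithin x O, ∃ C : NNReal,
      HolderOnWith C α (iteratedFDerivWithin ℝ n f O) u := by
  have h1 : ContDiffWithinAt ℝ 1 (iteratedFDerivWithin ℝ n f O) O x := by
    refine (hf x hx).iteratedFDerivWithin_right hO.uniqueDiffOn ?_ hx
    exact_mod_cast Nat.le_of_eq (Nat.add_comm 1 n)
  have h2 : ContDiffAt ℝ 1 (iteratedFDerivWithin ℝ n f O) x := h1.contDiffAt (hO.mem_nhds hx)
  obtain ⟨K, t, ht, hK⟩ := h2.exists_lipschitzOnWith
  refine ⟨(t ∩ Metric.ball x (1 / 2)) ∩ O, ?_, K, ?_⟩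
  · exact Filter.inter_mem (nhdsWithin_le_nhds
      (Filter.inter_mem ht (Metric.ball_mem_nhds x (by norm_num)))) self_mem_nhdsWithin
  · refine lipschitzOnWith_holder hα (hK.mono fun y hy => hy.1.1) fun y hy z hz => ?_
    have := dist_triangle y x z
    have h3 := hy.1.2; have h4 := hz.1.2
    rw [Metric.mem_ball] at h3 h4
    rw [dist_comm x z] at this
    linarith [this, h3, h4]

theorem HolderRegOn.of_succ {n : ℕ} {α : NNReal} {f : E → F₁} {O : Set E}
    (hO : IsOpen O) (hα : α ≤ 1) (hf : HolderRegOn (n + 1) α f O) : HolderRegOn n α f O :=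
  ⟨hf.1.of_le (by exact_mod_cast Nat.le_succ n), fun x hx => holder_aux hO hf.1 hα hx⟩

theorem HolderRegOn.congr_on {n : ℕ} {α : NNReal} {f g : E → F₁} {O : Set E}
    (hg : HolderRegOn n α g O) (h : Set.EqOn f g O) : HolderRegOn n α f O := by
  refine ⟨hg.1.congr h, fun x hx => ?_⟩
  obtain ⟨u, hu, C, hC⟩ := hg.2 x hx
  refine ⟨u ∩ O, Filter.inter_mem hu self_mem_nhdsWithin, C, fun y hy z hz => ?_⟩
  rw [iteratedFDerivWithin_congr h hy.2 n, iteratedFDerivWithin_congr h hz.2 n]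
  exact hC y hy.1 z hz.1

variable {F₂ : Type u} [NormedAddCommGroup F₂] [NormedSpace ℝ F₂]

theorem HolderRegOn.clm_comp {n : ℕ} {α : NNReal} {f : E → F₁} {O : Set E}
    (hO : IsOpen O) (L : F₁ →L[ℝ] F₂) (hf : HolderRegOn n α f O) :
    HolderRegOn n α (fun x => L (f x)) O := by
  refine ⟨hf.1.continuousLinearMap_comp L, fun x hx => ?_⟩
  obtain ⟨u, hu, C, hC⟩ := hf.2 x hx
  set T := ContinuousLinearMap.compContinuousMultilinearMapL ℝ (fun _ : Fin n => E) F₁ F₂ L with hT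
  refine ⟨u ∩ O, Filter.inter_mem hu self_mem_nhdsWithin, ‖T‖₊ * C, fun y hy z hz => ?_⟩
  have ey : iteratedFDerivWithin ℝ n (fun x => L (f x)) O y =
      T (iteratedFDerivWithin ℝ n f O y) :=
    L.iteratedFDerivWithin_comp_left (hf.1 y hy.2) hO.uniqueDiffOn hy.2 le_rfl
  have ez : iteratedFDerivWithin ℝ n (fun x => L (f x)) O z =
      T (iteratedFDerivWithin ℝ n f O z) :=
    L.iteratedFDerivWithin_comp_left (hf.1 z hz.2) hO.uniqueDiffOn hz.2 le_rfl
  rw [ey, ez]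
  calc edist (T (iteratedFDerivWithin ℝ n f O y)) (T (iteratedFDerivWithin ℝ n f O z))
      ≤ ‖T‖₊ * edist (iteratedFDerivWithin ℝ n f O y) (iteratedFDerivWithin ℝ n f O z) :=
        T.lipschitz _ _
    _ ≤ ‖T‖₊ * (C * edist y z ^ (α : ℝ)) := by gcongr; exact hC y hy.1 z hz.1
    _ = ↑(‖T‖₊ * C) * edist y z ^ (α : ℝ) := by push_cast; ring

theorem HolderRegOn.add {n : ℕ} {α : NNReal} {f g : E → F₁} {O : Set E}
    (hO : IsOpen O) (hf : HolderRegOn n α f O) (hg : HolderRegOn n α g O) :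
    HolderRegOn n α (fun x => f x + g x) O := by
  refine ⟨hf.1.add hg.1, fun x hx => ?_⟩
  obtain ⟨u, hu, C, hC⟩ := hf.2 x hx
  obtain ⟨v, hv, D, hD⟩ := hg.2 x hx
  refine ⟨(u ∩ v) ∩ O, Filter.inter_mem (Filter.inter_mem hu hv) self_mem_nhdsWithin,
    C + D, fun y hy z hz => ?_⟩
  rw [iteratedFDerivWithin_add_apply' (hf.1 y hy.2) (hg.1 y hy.2) hO.uniqueDiffOn hy.2,
    iteratedFDerivWithin_add_apply' (hf.1 z hz.2) (hg.1 z hz.2) hO.uniqueDiffOn hz.2]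
  calc edist (iteratedFDerivWithin ℝ n f O y + iteratedFDerivWithin ℝ n g O y)
        (iteratedFDerivWithin ℝ n f O z + iteratedFDerivWithin ℝ n g O z)
      ≤ edist (iteratedFDerivWithin ℝ n f O y) (iteratedFDerivWithin ℝ n f O z) +
        edist (iteratedFDerivWithin ℝ n g O y) (iteratedFDerivWithin ℝ n g O z) :=
        edist_add_add_le _ _ _ _
    _ ≤ C * edist y z ^ (α : ℝ) + D * edist y z ^ (α : ℝ) :=
        add_le_add (hC y hy.1.1 z hz.1.1) (hD y hy.1.2 z hz.1.2)
    _ = ↑(C + D) * edist y z ^ (α : ℝ) := by push_cast; ring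

theorem HolderRegOn.const {n : ℕ} {α : NNReal} {O : Set E} (hO : IsOpen O) (c : F₁) :
    HolderRegOn n α (fun _ : E => c) O := by
  refine ⟨contDiffOn_const, fun x hx => ⟨O, self_mem_nhdsWithin, 0, fun y hy z hz => ?_⟩⟩
  have h : iteratedFDerivWithin ℝ n (fun _ : E => c) O y =
      iteratedFDerivWithin ℝ n (fun _ : E => c) O z := by
    rcases Nat.eq_zero_or_pos n with hn | hn
    · subst hn
      rw [iteratedFDerivWithin_zero_eq_comp]; rfl
    · rw [iteratedFDerivWithin_const_of_ne (Nat.pos_iff_ne_zero.mp hn) c O]; rfl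
  rw [h, edist_self]
  exact zero_le

theorem HolderRegOn.sub {n : ℕ} {α : NNReal} {f g : E → F₁} {O : Set E}
    (hO : IsOpen O) (hf : HolderRegOn n α f O) (hg : HolderRegOn n α g O) :
    HolderRegOn n α (fun x => f x - g x) O := by
  have hneg : HolderRegOn n α (fun x => (-(ContinuousLinearMap.id ℝ F₁)) (g x)) O :=
    HolderRegOn.clm_comp hO _ hg
  have := hf.add hO hneg
  simp only [ContinuousLinearMap.neg_apply, ContinuousLinearMap.coe_id', id_eq] at this
  simpa [sub_eq_add_neg] using this

theorem HolderRegOn.sum {ι : Type*} {n : ℕ} {α : NNReal} {O : Set E}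
    (hO : IsOpen O) (s : Finset ι) {f : ι → E → F₁}
    (hf : ∀ i ∈ s, HolderRegOn n α (f i) O) :
    HolderRegOn n α (fun x => ∑ i ∈ s, f i x) O := by
  classical
  induction s using Finset.induction with
  | empty => simpa using HolderRegOn.const hO (0 : F₁)
  | @insert a s ha ih =>
    simp only [Finset.sum_insert ha]
    exact (hf a (Finset.mem_insert_self a s)).add hO
      (ih fun i hi => hf i (Finset.mem_insert_of_mem hi)) |>.congr_on fun x hx => rfl

theorem edist_iteratedFDerivWithin_succ {n : ℕ} {f : E → F₁} {O : Set E} (hO : IsOpen O)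
    {y z : E} (hy : y ∈ O) (hz : z ∈ O) :
    edist (iteratedFDerivWithin ℝ (n + 1) f O y) (iteratedFDerivWithin ℝ (n + 1) f O z) =
      edist (iteratedFDerivWithin ℝ n (fderiv ℝ f) O y)
        (iteratedFDerivWithin ℝ n (fderiv ℝ f) O z) := by
  have hcongr : Set.EqOn (fun w => fderivWithin ℝ f O w) (fderiv ℝ f) O := fun w hw =>
    fderivWithin_of_isOpen hO hw
  rw [iteratedFDerivWithin_succ_eq_comp_right hO.uniqueDiffOn hy,
    iteratedFDerivWithin_succ_eq_comp_right hO.uniqueDiffOn hz]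
  simp only [Function.comp_apply]
  rw [iteratedFDerivWithin_congr hcongr hy n, iteratedFDerivWithin_congr hcongr hz n]
  exact (continuousMultilinearCurryRightEquiv' ℝ n E F₁).symm.isometry.edist_eq _ _

theorem holderRegOn_succ_iff {n : ℕ} {α : NNReal} {f : E → F₁} {O : Set E} (hO : IsOpen O) :
    HolderRegOn (n + 1) α f O ↔
      DifferentiableOn ℝ f O ∧ HolderRegOn n α (fderiv ℝ f) O := by
  have hcast : ((n + 1 : ℕ) : WithTop ℕ∞) = (n : WithTop ℕ∞) + 1 := by push_cast; rfl
  constructor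
  · rintro ⟨hc, hh⟩
    rw [hcast] at hc
    obtain ⟨hd, -, hc'⟩ := (contDiffOn_succ_iff_fderiv_of_isOpen hO).mp hc
    refine ⟨hd, hc', fun x hx => ?_⟩
    obtain ⟨u, hu, C, hC⟩ := hh x hx
    refine ⟨u ∩ O, Filter.inter_mem hu self_mem_nhdsWithin, C, fun y hy z hz => ?_⟩
    rw [← edist_iteratedFDerivWithin_succ hO hy.2 hz.2]
    exact hC y hy.1 z hz.1
  · rintro ⟨hd, hc, hh⟩
    have hc' : ContDiffOn ℝ (n + 1 : ℕ) f O := by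
      rw [hcast]
      exact (contDiffOn_succ_iff_fderiv_of_isOpen hO).mpr ⟨hd, by simp, hc⟩
    refine ⟨hc', fun x hx => ?_⟩
    obtain ⟨u, hu, C, hC⟩ := hh x hx
    refine ⟨u ∩ O, Filter.inter_mem hu self_mem_nhdsWithin, C, fun y hy z hz => ?_⟩
    rw [edist_iteratedFDerivWithin_succ hO hy.2 hz.2]
    exact hC y hy.1 z hz.1

theorem holderRegOn_iterated_zero_iff {α C : NNReal} {f : E → F₁} {u O : Set E} :
    HolderOnWith C α (iteratedFDerivWithin ℝ 0 f O) u ↔ HolderOnWith C α f u := by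
  unfold HolderOnWith
  refine forall₄_congr fun x hx y hy => ?_
  rw [iteratedFDerivWithin_zero_eq_comp]
  simp only [Function.comp_apply]
  rw [(continuousMultilinearCurryFin0 ℝ E F₁).symm.isometry.edist_eq]

set_option linter.unreachableTactic false in
set_option linter.unusedTactic false in
theorem holderRegOn_bilinear : ∀ (n : ℕ) {E F₁ F₂ F₃ : Type u}
    [NormedAddCommGroup E] [NormedSpace ℝ E] [NormedAddCommGroup F₁] [NormedSpace ℝ F₁]
    [NormedAddCommGroup F₂] [NormedSpace ℝ F₂] [NormedAddCommGroup F₃] [NormedSpace ℝ F₃]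
    {α : NNReal}, α ≤ 1 → ∀ {O : Set E}, IsOpen O →
    ∀ (B : F₁ →L[ℝ] F₂ →L[ℝ] F₃) (f : E → F₁) (g : E → F₂),
    HolderRegOn n α f O → HolderRegOn n α g O →
    HolderRegOn n α (fun x => B (f x) (g x)) O := by
  intro n
  induction n with
  | zero =>
    intro E F₁ F₂ F₃ _ _ _ _ _ _ _ _ α hα O hO B f g hf hg
    refine ⟨(B.isBoundedBilinearMap.contDiff.comp_contDiffOn (hf.1.prodMk hg.1) :), fun x hx => ?_⟩
    obtain ⟨u, hu, Cf, hCf⟩ := hf.2 x hx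
    obtain ⟨v, hv, Cg, hCg⟩ := hg.2 x hx
    rw [holderRegOn_iterated_zero_iff] at hCf hCg
    rw [holderOnWith_iff_dist] at hCf hCg
    set w := ((u ∩ v) ∩ O) ∩ Metric.ball x 1 with hw
    have hxw : x ∈ w :=
      ⟨⟨⟨mem_of_mem_nhdsWithin hx hu, mem_of_mem_nhdsWithin hx hv⟩, hx⟩,
        Metric.mem_ball_self one_pos⟩
    have hwu : w ⊆ u := fun y hy => hy.1.1.1
    have hwv : w ⊆ v := fun y hy => hy.1.1.2
    refine ⟨w, ?_, ‖B‖₊ * ((‖f x‖₊ + Cf) * Cg + Cf * (‖g x‖₊ + Cg)), ?_⟩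
    · exact Filter.inter_mem (Filter.inter_mem (Filter.inter_mem hu hv) self_mem_nhdsWithin)
        (nhdsWithin_le_nhds (Metric.ball_mem_nhds x one_pos))
    · rw [holderRegOn_iterated_zero_iff, holderOnWith_iff_dist]
      intro y hy z hz
      have hfb : ‖f y‖ ≤ ‖f x‖ + Cf := by
        have h1 : dist (f y) (f x) ≤ Cf * dist y x ^ (α : ℝ) := hCf y (hwu hy) x (hwu hxw)
        have h2 : dist y x ^ (α : ℝ) ≤ 1 :=
          Real.rpow_le_one dist_nonneg (le_of_lt hy.2) α.coe_nonneg
        have h3 : dist (f y) (f x) ≤ Cf := by nlinarith [Cf.coe_nonneg]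
        calc ‖f y‖ ≤ ‖f x‖ + dist (f y) (f x) := by
              rw [dist_eq_norm]; exact norm_le_norm_add_norm_sub' _ _
          _ ≤ ‖f x‖ + Cf := by linarith
      have hgb : ‖g z‖ ≤ ‖g x‖ + Cg := by
        have h1 : dist (g z) (g x) ≤ Cg * dist z x ^ (α : ℝ) := hCg z (hwv hz) x (hwv hxw)
        have h2 : dist z x ^ (α : ℝ) ≤ 1 :=
          Real.rpow_le_one dist_nonneg (le_of_lt hz.2) α.coe_nonneg
        have h3 : dist (g z) (g x) ≤ Cg := by nlinarith [Cg.coe_nonneg]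
        calc ‖g z‖ ≤ ‖g x‖ + dist (g z) (g x) := by
              rw [dist_eq_norm]; exact norm_le_norm_add_norm_sub' _ _
          _ ≤ ‖g x‖ + Cg := by linarith
      have hdy : dist (f y) (f z) ≤ Cf * dist y z ^ (α : ℝ) := hCf y (hwu hy) z (hwu hz)
      have hdz : dist (g y) (g z) ≤ Cg * dist y z ^ (α : ℝ) := hCg y (hwv hy) z (hwv hz)
      have hdpos : (0 : ℝ) ≤ dist y z ^ (α : ℝ) := Real.rpow_nonneg dist_nonneg _
      have key : B (f y) (g y) - B (f z) (g z) =
          B (f y) (g y - g z) + B (f y - f z) (g z) := by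
        simp only [map_sub, ContinuousLinearMap.sub_apply]
        abel
      calc dist (B (f y) (g y)) (B (f z) (g z))
          = ‖B (f y) (g y - g z) + B (f y - f z) (g z)‖ := by rw [dist_eq_norm, key]
        _ ≤ ‖B (f y) (g y - g z)‖ + ‖B (f y - f z) (g z)‖ := norm_add_le _ _
        _ ≤ ‖B‖ * ‖f y‖ * ‖g y - g z‖ + ‖B‖ * ‖f y - f z‖ * ‖g z‖ :=
            add_le_add (B.le_opNorm₂ _ _) (B.le_opNorm₂ _ _)
        _ = ‖B‖ * ‖f y‖ * dist (g y) (g z) + ‖B‖ * dist (f y) (f z) * ‖g z‖ := by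
            rw [dist_eq_norm, dist_eq_norm]
        _ ≤ ‖B‖ * (‖f x‖ + Cf) * (Cg * dist y z ^ (α : ℝ)) +
            ‖B‖ * (Cf * dist y z ^ (α : ℝ)) * (‖g x‖ + Cg) := by
            gcongr <;> first
              | positivity
              | assumption
              | exact (norm_nonneg _).trans hfb
              | exact (norm_nonneg _).trans hgb
        _ = ↑(‖B‖₊ * ((‖f x‖₊ + Cf) * Cg + Cf * (‖g x‖₊ + Cg))) * dist y z ^ (α : ℝ) := by
            push_cast [coe_nnnorm]
            ring
  | succ n ih =>
    intro E F₁ F₂ F₃ _ _ _ _ _ _ _ _ α hα O hO B f g hf hg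
    have hfn : HolderRegOn n α f O := hf.of_succ hO hα
    have hgn : HolderRegOn n α g O := hg.of_succ hO hα
    obtain ⟨hfd, hDf⟩ := (holderRegOn_succ_iff hO).mp hf
    obtain ⟨hgd, hDg⟩ := (holderRegOn_succ_iff hO).mp hg
    set B₁ := (ContinuousLinearMap.compL ℝ E F₂ F₃).comp B with hB₁
    set B₂ := ((ContinuousLinearMap.compL ℝ E F₁ F₃).comp B.flip).flip with hB₂
    have t1 : HolderRegOn n α (fun x => B₁ (f x) (fderiv ℝ g x)) O := ih hα hO B₁ _ _ hfn hDg
    have t2 : HolderRegOn n α (fun x => B₂ (fderiv ℝ f x) (g x)) O := ih hα hO B₂ _ _ hDf hgn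
    refine (holderRegOn_succ_iff hO).mpr ⟨?_, ?_⟩
    · intro x hx
      exact (B.isBoundedBilinearMap.differentiableAt (f x, g x)).comp_differentiableWithinAt x
        ((hfd x hx).prodMk (hgd x hx))
    · refine (t1.add hO t2).congr_on fun x hx => ?_
      have hfdx : DifferentiableAt ℝ f x := (hfd x hx).differentiableAt (hO.mem_nhds hx)
      have hgdx : DifferentiableAt ℝ g x := (hgd x hx).differentiableAt (hO.mem_nhds hx)
      have hcd : DifferentiableAt ℝ (fun y => B (f y)) x := B.differentiableAt.comp x hfdx
      have h1 : fderiv ℝ (fun y => B (f y) (g y)) x =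
          (B (f x)).comp (fderiv ℝ g x) + (fderiv ℝ (fun y => B (f y)) x).flip (g x) :=
        fderiv_clm_apply hcd hgdx
      have h2 : fderiv ℝ (fun y => B (f y)) x = B.comp (fderiv ℝ f x) :=
        (B.hasFDerivAt.comp x hfdx.hasFDerivAt).fderiv
      show fderiv ℝ (fun y => B (f y) (g y)) x = B₁ (f x) (fderiv ℝ g x) + B₂ (fderiv ℝ f x) (g x)
      rw [h1, h2]
      refine congrArg₂ (· + ·) ?_ ?_ <;> ext v <;>
        simp [hB₁, hB₂, ContinuousLinearMap.compL_apply]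

end Helpers

/-! ### Recovering the second derivative from the second fundamental form -/

section Geom

variable {l m : ℕ}

def pi1 (l m : ℕ) : Amb l m →L[ℝ] EuclideanSpace ℝ (Fin l) :=
  (ContinuousLinearMap.fst ℝ (EuclideanSpace ℝ (Fin l)) (EuclideanSpace ℝ (Fin m))).comp
    (WithLp.prodContinuousLinearEquiv 2 ℝ (EuclideanSpace ℝ (Fin l))
      (EuclideanSpace ℝ (Fin m)) : Amb l m →L[ℝ] EuclideanSpace ℝ (Fin l) × EuclideanSpace ℝ (Fin m))

def pi2 (l m : ℕ) : Amb l m →L[ℝ] EuclideanSpace ℝ (Fin m) :=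
  (ContinuousLinearMap.snd ℝ (EuclideanSpace ℝ (Fin l)) (EuclideanSpace ℝ (Fin m))).comp
    (WithLp.prodContinuousLinearEquiv 2 ℝ (EuclideanSpace ℝ (Fin l))
      (EuclideanSpace ℝ (Fin m)) : Amb l m →L[ℝ] EuclideanSpace ℝ (Fin l) × EuclideanSpace ℝ (Fin m))

theorem d2_eq (F : EuclideanSpace ℝ (Fin l) → EuclideanSpace ℝ (Fin m))
    (x v w : EuclideanSpace ℝ (Fin l)) :
    fderiv ℝ (fderiv ℝ F) x v w =
      pi2 l m (secondFF F x v w) - fderiv ℝ F x (pi1 l m (secondFF F x v w)) := by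
  set T := graphTangent F x with hT
  set a : Amb l m := toAmb 0 (fderiv ℝ (fderiv ℝ F) x v w) with ha
  set nv := secondFF F x v w with hnv
  have hmem : a - nv ∈ T := by
    have h1 : a - nv ∈ Tᗮᗮ := Submodule.sub_starProjection_mem_orthogonal (K := Tᗮ) a
    rwa [Submodule.orthogonal_orthogonal] at h1
  obtain ⟨u, hu⟩ := hmem
  have e1 : pi1 l m (a - nv) = u := by rw [← hu]; rfl
  have e2 : pi2 l m (a - nv) = fderiv ℝ F x u := by rw [← hu]; rfl
  have e3 : pi1 l m a = 0 := rfl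
  have e4 : pi2 l m a = fderiv ℝ (fderiv ℝ F) x v w := rfl
  rw [map_sub, e3, zero_sub] at e1
  rw [map_sub, e4, ← e1, map_neg] at e2
  linear_combination (norm := module) e2

end Geom

set_option maxHeartbeats 1000000 in
/-- If an `l`-dimensional graph submanifold `L = graph F ⊂ ℝⁿ` is `C^{k,α}` (`k ≥ 1`,
`0 ≤ α ≤ 1`) and its second fundamental form is `C^{k-1,α}`, then `L` is `C^{k+1,α}`. -/
theorem stmt9 {l m : ℕ} (k : ℕ) (hk : 1 ≤ k) (α : NNReal) (hα : α ≤ 1)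
    (O : Set (EuclideanSpace ℝ (Fin l))) (hO : IsOpen O)
    (F : EuclideanSpace ℝ (Fin l) → EuclideanSpace ℝ (Fin m))
    (hF : HolderRegOn k α F O)
    (hF2 : ∀ x ∈ O, DifferentiableAt ℝ (fderiv ℝ F) x)
    (hII : ∀ v w : EuclideanSpace ℝ (Fin l),
      HolderRegOn (k - 1) α (fun x => secondFF F x v w) O) :
    HolderRegOn (k + 1) α F O := by
  obtain ⟨k', rfl⟩ : ∃ k', k = k' + 1 := ⟨k - 1, (Nat.succ_pred_eq_of_pos hk).symm⟩
  obtain ⟨hFd, hDF⟩ := (holderRegOn_succ_iff hO).mp hF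
  have hII' : ∀ v w : EuclideanSpace ℝ (Fin l),
      HolderRegOn k' α (fun x => secondFF F x v w) O := hII
  set b : Fin l → EuclideanSpace ℝ (Fin l) := fun i => EuclideanSpace.single i (1 : ℝ) with hb
  set h : Fin l → Fin l → EuclideanSpace ℝ (Fin l) → EuclideanSpace ℝ (Fin m) := fun i j x =>
    pi2 l m (secondFF F x (b i) (b j)) -
      fderiv ℝ F x (pi1 l m (secondFF F x (b i) (b j))) with hh
  have hhreg : ∀ i j, HolderRegOn k' α (h i j) O := by
    intro i j
    have hS := hII' (b i) (b j)
    have h1 : HolderRegOn k' α (fun x => pi2 l m (secondFF F x (b i) (b j))) O :=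
      HolderRegOn.clm_comp hO (pi2 l m) hS
    have h2 : HolderRegOn k' α (fun x =>
        (ContinuousLinearMap.id ℝ (EuclideanSpace ℝ (Fin l) →L[ℝ] EuclideanSpace ℝ (Fin m)))
          (fderiv ℝ F x) (pi1 l m (secondFF F x (b i) (b j)))) O :=
      holderRegOn_bilinear k' hα hO (ContinuousLinearMap.id ℝ _) (fderiv ℝ F) _ hDF
        (HolderRegOn.clm_comp hO (pi1 l m) hS)
    exact HolderRegOn.sub hO h1 h2
  set ψ : Fin l → EuclideanSpace ℝ (Fin l) →
      (EuclideanSpace ℝ (Fin l) →L[ℝ] EuclideanSpace ℝ (Fin m)) := fun i x =>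
    ∑ j, ContinuousLinearMap.smulRightL ℝ (EuclideanSpace ℝ (Fin l)) (EuclideanSpace ℝ (Fin m))
      (EuclideanSpace.proj j) (h i j x) with hψ
  have hψreg : ∀ i, HolderRegOn k' α (ψ i) O := fun i =>
    HolderRegOn.sum hO Finset.univ fun j _ => HolderRegOn.clm_comp hO _ (hhreg i j)
  set Φ : EuclideanSpace ℝ (Fin l) →
      (EuclideanSpace ℝ (Fin l) →L[ℝ] EuclideanSpace ℝ (Fin l) →L[ℝ] EuclideanSpace ℝ (Fin m)) :=
    fun x => ∑ i, ContinuousLinearMap.smulRightL ℝ (EuclideanSpace ℝ (Fin l))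
      (EuclideanSpace ℝ (Fin l) →L[ℝ] EuclideanSpace ℝ (Fin m))
      (EuclideanSpace.proj i) (ψ i x) with hΦ
  have hΦreg : HolderRegOn k' α Φ O :=
    HolderRegOn.sum hO Finset.univ fun i _ => HolderRegOn.clm_comp hO _ (hψreg i)
  have hexp : ∀ v : EuclideanSpace ℝ (Fin l), v = ∑ i, v i • b i := by
    intro v
    have := (EuclideanSpace.basisFun (Fin l) ℝ).sum_repr v
    simpa [EuclideanSpace.basisFun_apply, EuclideanSpace.basisFun_repr, hb] using this.symm
  have key : Set.EqOn (fderiv ℝ (fderiv ℝ F)) Φ O := by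
    intro x hx
    have hD2 : ∀ i j, fderiv ℝ (fderiv ℝ F) x (b i) (b j) = h i j x := fun i j =>
      d2_eq F x (b i) (b j)
    refine ContinuousLinearMap.ext fun v => ContinuousLinearMap.ext fun w => ?_
    have hrhs : Φ x v w = ∑ i, v i • (∑ j, w j • h i j x) := by
      simp [hΦ, hψ, ContinuousLinearMap.sum_apply, ContinuousLinearMap.smulRight_apply,
        ContinuousLinearMap.smul_apply, ContinuousLinearMap.smulRightL,
        Finset.smul_sum]
    have hlhs : fderiv ℝ (fderiv ℝ F) x v w =
        ∑ i, v i • (∑ j, w j • fderiv ℝ (fderiv ℝ F) x (b i) (b j)) := by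
      conv_lhs => rw [hexp v]
      rw [map_sum, ContinuousLinearMap.sum_apply]
      refine Finset.sum_congr rfl fun i _ => ?_
      rw [map_smul, ContinuousLinearMap.smul_apply]
      congr 1
      conv_lhs => rw [hexp w]
      rw [map_sum]
      exact Finset.sum_congr rfl fun j _ => by rw [map_smul]
    rw [hlhs, hrhs]
    simp only [hD2]
  exact (holderRegOn_succ_iff hO).mpr ⟨hFd, (holderRegOn_succ_iff hO).mpr
    ⟨fun y hy => (hF2 y hy).differentiableWithinAt, hΦreg.congr_on key⟩⟩
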